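/- Let X be a nonzero real Banach space and let A : X → X* be a continuous linear operator which is symmetric (⟨Ax, y⟩ = ⟨x, Ay⟩ for all x, y ∈ X), satisfies ⟨Ax, x⟩ ≥ 0 for all x ∈ X, and is invertible with continuous inverse A⁻¹ : X* → X. Then ⟨Ax, x⟩ ≥ ‖A⁻¹‖⁻¹·‖x‖² for every x ∈ X, and ‖A⁻¹‖⁻¹ is the largest possible coercivity coefficient: if β > 0 satisfies β‖x‖² ≤ ⟨Ax, x⟩ for all x ∈ X, then β ≤ ‖A⁻¹‖⁻¹. -/

import Mathlib

/-- Cauchy–Schwarz for a symmetric positive semidefinite bilinear form. -/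
theorem stmt6_cs {X : Type*} [NormedAddCommGroup X] [NormedSpace ℝ X]
    (A : X ≃L[ℝ] StrongDual ℝ X)
    (hsym : ∀ x y : X, A x y = A y x)
    (hpos : ∀ x : X, 0 ≤ A x x) (x y : X) :
    (A x y) ^ 2 ≤ A x x * A y y := by
  have h : ∀ t : ℝ, 0 ≤ A y y * (t * t) + (2 * A x y) * t + A x x := by
    intro t
    have h0 := hpos (x + t • y)
    have hxy := hsym x y
    simp only [map_add, map_smul, ContinuousLinearEquiv.coe_coe,
      ContinuousLinearMap.add_apply, ContinuousLinearMap.coe_smul',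
      Pi.smul_apply, smul_eq_mul] at h0
    rw [hxy] at h0 ⊢
    ring_nf at h0 ⊢
    linarith [h0]
  have hd := discrim_le_zero h
  rw [discrim] at hd
  nlinarith [hd]

set_option maxHeartbeats 800000 in
/-- Generalized converse of the Lax–Milgram theorem: if `X` is a nonzero real Banach
space and `A : X → X*` is a continuous linear operator which is symmetric, positive
semidefinite and invertible with continuous inverse, then
`⟪Ax, x⟫ ≥ ‖A⁻¹‖⁻¹·‖x‖²` for all `x`, and `‖A⁻¹‖⁻¹` is the largest possible
coercivity coefficient. -/
theorem stmt6 {X : Type*} [NormedAddCommGroup X] [NormedSpace ℝ X]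
    [CompleteSpace X] [Nontrivial X]
    (A : X ≃L[ℝ] StrongDual ℝ X)
    (hsym : ∀ x y : X, A x y = A y x)
    (hpos : ∀ x : X, 0 ≤ A x x) :
    (∀ x : X, ‖(A.symm : StrongDual ℝ X →L[ℝ] X)‖⁻¹ * ‖x‖ ^ 2 ≤ A x x) ∧
    ∀ β : ℝ, 0 < β → (∀ x : X, β * ‖x‖ ^ 2 ≤ A x x) →
      β ≤ ‖(A.symm : StrongDual ℝ X →L[ℝ] X)‖⁻¹ := by
  set B := (A.symm : StrongDual ℝ X →L[ℝ] X) with hBdef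
  have hB : 0 < ‖B‖ := by
    obtain ⟨x, hx⟩ := exists_ne (0 : X)
    have h1 : ‖x‖ ≤ ‖B‖ * ‖A x‖ := by
      calc ‖x‖ = ‖B (A x)‖ := by rw [show B (A x) = x from A.symm_apply_apply x]
        _ ≤ ‖B‖ * ‖A x‖ := B.le_opNorm _
    have h2 : 0 < ‖x‖ := norm_pos_iff.mpr hx
    nlinarith [norm_nonneg (A x)]
  constructor
  · intro x
    obtain ⟨f, hf1, hfx⟩ := exists_dual_vector' ℝ x
    have hABf : A (B f) = f := A.apply_symm_apply f
    have hcs := stmt6_cs A hsym hpos x (B f)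
    have h1 : A x (B f) = f x := by
      rw [hsym x (B f), hABf]
    have h2 : A (B f) (B f) = f (B f) := by rw [hABf]
    have h3 : f (B f) ≤ ‖B‖ := by
      calc f (B f) ≤ ‖f (B f)‖ := le_abs_self _
        _ ≤ ‖f‖ * ‖B f‖ := f.le_opNorm _
        _ ≤ ‖f‖ * (‖B‖ * ‖f‖) :=
            mul_le_mul_of_nonneg_left (B.le_opNorm f) (norm_nonneg f)
        _ = ‖B‖ * (‖f‖ * ‖f‖) := by ring
        _ ≤ ‖B‖ * (1 * 1) := by
            apply mul_le_mul_of_nonneg_left _ (le_of_lt hB)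
            exact mul_le_mul hf1.le hf1.le (norm_nonneg f) zero_le_one
        _ = ‖B‖ := by ring
    have key : ‖x‖ ^ 2 ≤ A x x * ‖B‖ := by
      have hk : (f x) ^ 2 ≤ A x x * ‖B‖ := by
        calc (f x)^2 = (A x (B f))^2 := by rw [h1]
          _ ≤ A x x * A (B f) (B f) := hcs
          _ ≤ A x x * ‖B‖ := by
              rw [h2]; exact mul_le_mul_of_nonneg_left h3 (hpos x)
      have hfx' : (f x : ℝ) = ‖x‖ := by exact_mod_cast hfx
      rwa [hfx'] at hk
    rw [inv_mul_le_iff₀ hB]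
    linarith [key]
  · intro β hβ hcoer
    have hBle : ‖B‖ ≤ β⁻¹ := by
      apply ContinuousLinearMap.opNorm_le_bound _ (by positivity)
      intro f
      have h1 : β * ‖B f‖ ^ 2 ≤ A (B f) (B f) := hcoer (B f)
      have h2 : A (B f) = f := A.apply_symm_apply f
      rw [h2] at h1
      have h3 : f (B f) ≤ ‖f‖ * ‖B f‖ :=
        le_trans (le_abs_self _) (f.le_opNorm _)
      rcases eq_or_lt_of_le (norm_nonneg (B f)) with h0 | h0
      · rw [← h0]; positivity
      · have h5 : (β * ‖B f‖) * ‖B f‖ ≤ ‖f‖ * ‖B f‖ := by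
          calc (β * ‖B f‖) * ‖B f‖ = β * ‖B f‖ ^ 2 := by ring
            _ ≤ f (B f) := h1
            _ ≤ ‖f‖ * ‖B f‖ := h3
        have h4 : β * ‖B f‖ ≤ ‖f‖ := le_of_mul_le_mul_right h5 h0
        rw [show β⁻¹ * ‖f‖ = ‖f‖ / β by ring, le_div_iff₀ hβ]
        calc ‖B f‖ * β = β * ‖B f‖ := by ring
          _ ≤ ‖f‖ := h4
    calc β = (β⁻¹)⁻¹ := (inv_inv β).symm
      _ ≤ ‖B‖⁻¹ := inv_anti₀ hB hBle
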